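/- arXiv:2305.04907 — 3 statements merged into one kernel-verified Lean document; each statement's English description precedes it below -/
import Mathlib

section
/- Let S be a blocking semioval with exactly 25 points in PG(2,11) such that no line meets S in more than 6 points. Suppose Q and R are distinct points of S each lying on exactly three 6-secants to S, with the line n through Q and R a 6-secant; let ℓ1, ℓ2 be the other two 6-secants through Q, let m1, m2 be the other two 6-secants through R, and let I be the set of four intersection points ℓ_i ∩ m_j for i,j ∈ {1,2}. Then at least three points of I lie in S. -/
instance : Fact (Nat.Prime 11) := ⟨by norm_num⟩

/-- The points of `PG(2,11)`: the projectivization of `(ZMod 11)^3`. -/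
abbrev PGPoint : Type := Projectivization (ZMod 11) (Fin 3 → ZMod 11)

/-- The lines of `PG(2,11)`: the 2-dimensional subspaces of `(ZMod 11)^3`. -/
abbrev PGLine : Type :=
  {W : Submodule (ZMod 11) (Fin 3 → ZMod 11) // Module.finrank (ZMod 11) W = 2}

/-- Incidence: a point lies on a line when its representing 1-dimensional
subspace is contained in the line's 2-dimensional subspace. -/
def PGmem (P : PGPoint) (L : PGLine) : Prop := Projectivization.submodule P ≤ L.val

/-- The set of points lying on a line. -/
def linePts (L : PGLine) : Set PGPoint := {P | PGmem P L}

/-- The set of points of `S` lying on the line `L`. -/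
def secantPts (S : Set PGPoint) (L : PGLine) : Set PGPoint := {P ∈ S | PGmem P L}

/-- A line is a `k`-secant to `S` if it meets `S` in exactly `k` points. -/
def IsSecant (S : Set PGPoint) (k : ℕ) (L : PGLine) : Prop := (secantPts S L).ncard = k

/-- A tangent line to `S` is a 1-secant. -/
def IsTangent (S : Set PGPoint) (L : PGLine) : Prop := IsSecant S 1 L

/-- A blocking set: every line meets `S`, but `S` contains no line. -/
def IsBlockingSet (S : Set PGPoint) : Prop :=
  (∀ L : PGLine, (secantPts S L).Nonempty) ∧ ∀ L : PGLine, ¬ linePts L ⊆ S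

/-- A semioval: every point of `S` lies on exactly one tangent line to `S`. -/
def IsSemioval (S : Set PGPoint) : Prop :=
  ∀ P ∈ S, ∃! L : PGLine, PGmem P L ∧ IsTangent S L

/-- A blocking semioval is both a blocking set and a semioval. -/
def IsBlockingSemioval (S : Set PGPoint) : Prop := IsBlockingSet S ∧ IsSemioval S


open Module Projectivization

abbrev V3 := Fin 3 → ZMod 11

lemma finrank_V3 : finrank (ZMod 11) V3 = 3 := by simp [Module.finrank_pi]

noncomputable def dotL (w : V3) : V3 →ₗ[ZMod 11] ZMod 11 :=
  ∑ i, w i • LinearMap.proj i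

lemma dotL_apply (w v : V3) : dotL w v = ∑ i, w i * v i := by
  simp [dotL]

lemma dotL_single (w : V3) (j : Fin 3) : dotL w (Pi.single j 1) = w j := by
  rw [dotL_apply]
  simp [Pi.single_apply]

lemma dotL_eq_zero {w : V3} (h : dotL w = 0) : w = 0 := by
  funext j
  have := dotL_single w j
  rw [h] at this
  simpa using this.symm

lemma dotL_add (w w' : V3) : dotL (w + w') = dotL w + dotL w' := by
  refine LinearMap.ext fun v => ?_
  simp [dotL_apply, add_mul, Finset.sum_add_distrib]

lemma dotL_smul (c : ZMod 11) (w : V3) : dotL (c • w) = c • dotL w := by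
  refine LinearMap.ext fun v => ?_
  simp [dotL_apply, mul_assoc, Finset.mul_sum]

lemma dotL_sub (w w' : V3) : dotL (w - w') = dotL w - dotL w' := by
  refine LinearMap.ext fun v => ?_
  simp [dotL_apply, sub_mul, Finset.sum_sub_distrib]

lemma exists_dotL_ne_zero {w : V3} (hw : w ≠ 0) : ∃ v, dotL w v ≠ 0 := by
  by_contra h
  push_neg at h
  exact hw (dotL_eq_zero (LinearMap.ext fun v => by simpa using h v))

lemma finrank_ker_dotL {w : V3} (hw : w ≠ 0) :
    finrank (ZMod 11) (LinearMap.ker (dotL w)) = 2 := by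
  have hfin : FiniteDimensional (ZMod 11) V3 := by infer_instance
  obtain ⟨v0, hv0⟩ := exists_dotL_ne_zero hw
  have hrange : LinearMap.range (dotL w) = ⊤ := by
    rw [LinearMap.range_eq_top]
    intro c
    refine ⟨(c * (dotL w v0)⁻¹) • v0, ?_⟩
    rw [map_smul, smul_eq_mul]
    field_simp
  have := LinearMap.finrank_range_add_finrank_ker (dotL w)
  rw [hrange, finrank_top, finrank_self, finrank_V3] at this
  omega

noncomputable def delta (P : PGPoint) : PGLine :=
  ⟨LinearMap.ker (dotL P.rep), finrank_ker_dotL P.rep_nonzero⟩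

lemma delta_injective : Function.Injective delta := by
  intro P P' h
  have hk : LinearMap.ker (dotL P.rep) = LinearMap.ker (dotL P'.rep) :=
    congrArg Subtype.val h
  obtain ⟨u, hu⟩ := exists_dotL_ne_zero P.rep_nonzero
  set c := dotL P'.rep u * (dotL P.rep u)⁻¹ with hc
  have hprop : P'.rep = c • P.rep := by
    have key : ∀ x, dotL P'.rep x = c * dotL P.rep x := by
      intro x
      have hmem : x - (dotL P.rep x * (dotL P.rep u)⁻¹) • u ∈ LinearMap.ker (dotL P.rep) := by
        rw [LinearMap.mem_ker, map_sub, map_smul, smul_eq_mul, mul_assoc, inv_mul_cancel₀ hu,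
          mul_one, sub_self]
      rw [hk, LinearMap.mem_ker, map_sub, map_smul, sub_eq_zero] at hmem
      rw [hmem, hc]
      rw [smul_eq_mul]
      ring
    have heq : dotL P'.rep = dotL (c • P.rep) := by
      refine LinearMap.ext fun x => ?_
      rw [dotL_smul]; exact key x
    have h0 : dotL (P'.rep - c • P.rep) = 0 := by
      rw [dotL_sub, heq, sub_self]
    have := dotL_eq_zero h0
    rwa [sub_eq_zero] at this
  have hc0 : c ≠ 0 := by
    intro h0
    exact P'.rep_nonzero (by rw [hprop, h0, zero_smul])
  have : Projectivization.mk (ZMod 11) P'.rep P'.rep_nonzero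
      = Projectivization.mk (ZMod 11) P.rep P.rep_nonzero :=
    (Projectivization.mk_eq_mk_iff' _ _ _ _ _).2 ⟨c, hprop.symm⟩
  rw [Projectivization.mk_rep, Projectivization.mk_rep] at this
  exact this.symm

noncomputable def psiMap (L : PGLine) : V3 →ₗ[ZMod 11] (L.val →ₗ[ZMod 11] ZMod 11) where
  toFun w := (dotL w).comp L.val.subtype
  map_add' w w' := by rw [dotL_add]; rfl
  map_smul' c w := by simp only [RingHom.id_apply]; rw [dotL_smul]; rfl

lemma delta_surjective : Function.Surjective delta := by
  intro L
  have h2 : finrank (ZMod 11) (L.val →ₗ[ZMod 11] ZMod 11) = 2 := by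
    rw [Module.finrank_linearMap_self, L.2]
  have hnoninj : ¬ Function.Injective (psiMap L) := by
    intro hinj
    have := LinearMap.finrank_le_finrank_of_injective hinj
    rw [h2, finrank_V3] at this
    omega
  have : ∃ w : V3, w ≠ 0 ∧ psiMap L w = 0 := by
    rw [Function.not_injective_iff] at hnoninj
    obtain ⟨a, b, hab, hne⟩ := hnoninj
    exact ⟨a - b, sub_ne_zero.2 hne, by rw [map_sub, hab, sub_self]⟩
  obtain ⟨w, hw0, hwv⟩ := this
  have hle : L.val ≤ LinearMap.ker (dotL w) := by
    intro x hx
    rw [LinearMap.mem_ker]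
    have := congrFun (congrArg (fun f => f.toFun) hwv) ⟨x, hx⟩
    simpa [psiMap] using this
  have heq : L.val = LinearMap.ker (dotL w) :=
    Submodule.eq_of_le_of_finrank_eq hle (by rw [L.2, finrank_ker_dotL hw0])
  refine ⟨Projectivization.mk (ZMod 11) w hw0, ?_⟩
  have hrep : ∃ a : (ZMod 11)ˣ, a • w = (Projectivization.mk (ZMod 11) w hw0).rep :=
    Projectivization.exists_smul_eq_mk_rep (ZMod 11) w hw0
  obtain ⟨a, ha⟩ := hrep
  refine Subtype.ext ?_
  show LinearMap.ker (dotL ((Projectivization.mk (ZMod 11) w hw0)).rep) = L.val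
  rw [← ha, heq]
  have : dotL ((a : ZMod 11) • w) = (a : ZMod 11) • dotL w := dotL_smul _ _
  ext x
  simp only [LinearMap.mem_ker, this, LinearMap.smul_apply, smul_eq_mul, Units.smul_def]
  constructor
  · intro h
    have := mul_eq_zero.1 h
    rcases this with h1 | h1
    · exact absurd h1 (by exact_mod_cast a.ne_zero)
    · exact h1
  · intro h; rw [h, mul_zero]

lemma PGmem_iff (P : PGPoint) (L : PGLine) : PGmem P L ↔ P.rep ∈ L.val := by
  rw [PGmem, Projectivization.submodule_eq, Submodule.span_singleton_le_iff_mem]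

lemma PGmem_mk_iff {v : V3} (hv : v ≠ 0) (L : PGLine) :
    PGmem (Projectivization.mk (ZMod 11) v hv) L ↔ v ∈ L.val := by
  rw [PGmem, Projectivization.submodule_mk, Submodule.span_singleton_le_iff_mem]

lemma indep_of_ne {P P' : PGPoint} (h : P ≠ P') :
    LinearIndependent (ZMod 11) ![P.rep, P'.rep] := by
  have h2 := (Projectivization.independent_pair_iff_ne P P').2 h
  rw [Projectivization.independent_iff] at h2
  have e : Projectivization.rep ∘ ![P, P'] = ![P.rep, P'.rep] := by
    funext i; fin_cases i <;> rfl
  rwa [e] at h2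

noncomputable def lineThrough (P P' : PGPoint) (h : P ≠ P') : PGLine :=
  ⟨Submodule.span (ZMod 11) {P.rep, P'.rep}, by
    have hi := indep_of_ne h
    have : ({P.rep, P'.rep} : Set V3) = Set.range ![P.rep, P'.rep] := by
      simp [Matrix.range_cons, Matrix.range_empty, Set.pair_comm]
    rw [this, finrank_span_eq_card hi]
    simp⟩

lemma mem_lineThrough_left (P P' : PGPoint) (h : P ≠ P') : PGmem P (lineThrough P P' h) := by
  rw [PGmem_iff]
  exact Submodule.subset_span (by simp)

lemma mem_lineThrough_right (P P' : PGPoint) (h : P ≠ P') : PGmem P' (lineThrough P P' h) := by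
  rw [PGmem_iff]
  exact Submodule.subset_span (by simp)

lemma line_unique {P P' : PGPoint} {L M : PGLine} (h : P ≠ P')
    (hPL : PGmem P L) (hP'L : PGmem P' L) (hPM : PGmem P M) (hP'M : PGmem P' M) : L = M := by
  have key : ∀ N : PGLine, PGmem P N → PGmem P' N → N = lineThrough P P' h := by
    intro N hPN hP'N
    have hle : (lineThrough P P' h).val ≤ N.val := by
      rw [PGmem_iff] at hPN hP'N
      exact Submodule.span_le.2 (by rintro x (rfl | rfl) <;> simp_all)
    have := Submodule.eq_of_le_of_finrank_eq hle (by rw [N.2, (lineThrough P P' h).2])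
    exact Subtype.ext this.symm
  rw [key L hPL hP'L, key M hPM hP'M]

instance : Finite PGPoint := by
  unfold PGPoint Projectivization
  infer_instance

instance : Finite PGLine := by
  have : Finite (Submodule (ZMod 11) V3) :=
    Finite.of_injective (fun W => (W : Set V3)) (fun a b h => SetLike.coe_injective h)
  exact Subtype.finite

lemma line_card (L : PGLine) : (linePts L).ncard = 12 := by
  classical
  obtain ⟨b⟩ : Nonempty (Basis (Fin 2) (ZMod 11) L.val) :=
    ⟨Module.finBasisOfFinrankEq _ _ L.2⟩
  set e : V3 := (b 0 : V3) with he
  set f : V3 := (b 1 : V3) with hf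
  have heL : e ∈ L.val := (b 0).2
  have hfL : f ∈ L.val := (b 1).2
  have hpair : ∀ a c : ZMod 11, a • e + c • f = 0 → a = 0 ∧ c = 0 := by
    intro a c h
    have : a • b 0 + c • b 1 = (0 : L.val) := Subtype.ext (by
      push_cast
      exact h)
    have h2 := Fintype.linearIndependent_iff.1 b.linearIndependent ![a, c] (by
      rw [Fin.sum_univ_two]
      simpa using this)
    exact ⟨h2 0, h2 1⟩
  have he0 : e ≠ 0 := fun h => by
    have := hpair 1 0 (by rw [h]; simp)
    simp at this
  have hcf0 : ∀ c : ZMod 11, c • e + f ≠ 0 := fun c h => by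
    have := hpair c 1 (by rw [one_smul]; exact h)
    simp at this
  set g : ZMod 11 → PGPoint := fun c => Projectivization.mk (ZMod 11) (c • e + f) (hcf0 c)
    with hg
  have hEq : linePts L = insert (Projectivization.mk (ZMod 11) e he0) (Set.range g) := by
    ext P
    constructor
    · intro hP
      rw [linePts, Set.mem_setOf_eq, PGmem_iff] at hP
      have hrep : (⟨P.rep, hP⟩ : L.val) = (b.repr ⟨P.rep, hP⟩ 0) • b 0
          + (b.repr ⟨P.rep, hP⟩ 1) • b 1 := by
        have := b.sum_repr ⟨P.rep, hP⟩
        rw [Fin.sum_univ_two] at this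
        exact this.symm
      set x0 := b.repr ⟨P.rep, hP⟩ 0
      set x1 := b.repr ⟨P.rep, hP⟩ 1
      have hrepV : P.rep = x0 • e + x1 • f := congrArg Subtype.val hrep
      by_cases hx1 : x1 = 0
      · left
        have hx0 : x0 ≠ 0 := by
          intro h0
          exact P.rep_nonzero (by rw [hrepV, hx1, h0, zero_smul, zero_smul, add_zero])
        rw [← Projectivization.mk_rep P]
        exact (Projectivization.mk_eq_mk_iff' _ _ _ _ _).2 ⟨x0, by rw [hrepV, hx1]; simp⟩
      · right
        refine ⟨x1⁻¹ * x0, ?_⟩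
        rw [hg]
        conv_rhs => rw [← Projectivization.mk_rep P]
        refine (Projectivization.mk_eq_mk_iff' _ _ _ _ _).2 ⟨x1⁻¹, ?_⟩
        rw [hrepV, smul_add, smul_smul, smul_smul, inv_mul_cancel₀ hx1, one_smul]
    · intro hP
      rw [linePts, Set.mem_setOf_eq]
      rcases hP with rfl | ⟨c, rfl⟩
      · rw [PGmem_mk_iff]; exact heL
      · rw [hg, PGmem_mk_iff]
        exact L.val.add_mem (L.val.smul_mem _ heL) hfL
  rw [hEq]
  have hginj : Function.Injective g := by
    intro c c' h
    rw [hg] at h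
    obtain ⟨a, ha⟩ := (Projectivization.mk_eq_mk_iff' _ _ _ _ _).1 h
    rw [smul_add, smul_smul] at ha
    have hv : (a * c' - c) • e + (a - 1) • f = 0 := by
      linear_combination (norm := module) ha
    obtain ⟨h1, h2⟩ := hpair _ _ hv
    have ha1 : a = 1 := by linear_combination h2
    rw [ha1, one_mul] at h1
    linear_combination -h1
  have hnotin : Projectivization.mk (ZMod 11) e he0 ∉ Set.range g := by
    rintro ⟨c, hc⟩
    rw [hg] at hc
    obtain ⟨a, ha⟩ := (Projectivization.mk_eq_mk_iff' _ _ _ _ _).1 hc.symm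
    rw [smul_add, smul_smul] at ha
    have hv : (a * c - 1) • e + a • f = 0 := by
      linear_combination (norm := module) ha
    obtain ⟨h1, h2⟩ := hpair _ _ hv
    rw [h2, zero_mul] at h1
    simp at h1
  rw [Set.ncard_insert_of_notMem hnotin (Set.toFinite _), ← Set.image_univ,
    Set.ncard_image_of_injective _ hginj, Set.ncard_univ, Nat.card_zmod]

lemma dotL_comm (w v : V3) : dotL w v = dotL v w := by
  rw [dotL_apply, dotL_apply]
  exact Finset.sum_congr rfl fun i _ => mul_comm _ _

lemma PGmem_delta_iff (Z P' : PGPoint) : PGmem Z (delta P') ↔ dotL Z.rep P'.rep = 0 := by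
  rw [PGmem_iff]
  show Z.rep ∈ LinearMap.ker (dotL P'.rep) ↔ _
  rw [LinearMap.mem_ker, dotL_comm]

lemma lines_through_card (Z : PGPoint) : {L : PGLine | PGmem Z L}.ncard = 12 := by
  have hset : {L : PGLine | PGmem Z L} = delta '' (linePts (delta Z)) := by
    ext L
    obtain ⟨P', rfl⟩ := delta_surjective L
    simp only [Set.mem_setOf_eq, PGmem_delta_iff]
    constructor
    · intro h
      exact ⟨P', by rw [linePts, Set.mem_setOf_eq, PGmem_delta_iff, dotL_comm]; exact h, rfl⟩
    · rintro ⟨P'', hP'', heq⟩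
      have := delta_injective heq
      subst this
      rw [linePts, Set.mem_setOf_eq, PGmem_delta_iff] at hP''
      rw [dotL_comm]; exact hP''
  rw [hset, Set.ncard_image_of_injective _ delta_injective, line_card]

noncomputable def linesThru (Z : PGPoint) : Finset PGLine :=
  (Set.toFinite {L : PGLine | PGmem Z L}).toFinset

lemma mem_linesThru {Z : PGPoint} {L : PGLine} : L ∈ linesThru Z ↔ PGmem Z L := by
  rw [linesThru, Set.Finite.mem_toFinset, Set.mem_setOf_eq]

lemma linesThru_card (Z : PGPoint) : (linesThru Z).card = 12 := by
  rw [linesThru, ← Set.ncard_eq_toFinset_card _ (Set.toFinite _), lines_through_card]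

open scoped Classical in
noncomputable def tangentsThru (S : Set PGPoint) (Z : PGPoint) : Finset PGLine :=
  (linesThru Z).filter (fun L => IsTangent S L)

open scoped Classical in
lemma mem_tangentsThru {S : Set PGPoint} {Z : PGPoint} {L : PGLine} :
    L ∈ tangentsThru S Z ↔ PGmem Z L ∧ IsTangent S L := by
  rw [tangentsThru]
  simp [Finset.mem_filter, mem_linesThru]

lemma sum_secant (S : Set PGPoint) {Z : PGPoint} (hZ : Z ∉ S) :
    ∑ L ∈ linesThru Z, (secantPts S L).ncard = S.ncard := by
  classical
  have hbi : (Set.toFinite S).toFinset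
      = (linesThru Z).biUnion (fun L => (Set.toFinite (secantPts S L)).toFinset) := by
    ext P
    simp only [Set.Finite.mem_toFinset, Finset.mem_biUnion, mem_linesThru]
    constructor
    · intro hP
      have hPZ : Z ≠ P := fun h => hZ (h ▸ hP)
      exact ⟨lineThrough Z P hPZ, mem_lineThrough_left _ _ _,
        ⟨hP, mem_lineThrough_right _ _ _⟩⟩
    · rintro ⟨L, _, hP, _⟩
      exact hP
  have hdisj : ∀ L ∈ linesThru Z, ∀ L' ∈ linesThru Z, L ≠ L' →
      Disjoint ((Set.toFinite (secantPts S L)).toFinset)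
        ((Set.toFinite (secantPts S L')).toFinset) := by
    intro L hL L' hL' hne
    rw [Finset.disjoint_left]
    intro P hP hP'
    rw [Set.Finite.mem_toFinset] at hP hP'
    obtain ⟨hPS, hPL⟩ := hP
    obtain ⟨-, hPL'⟩ := hP'
    have hPZ : Z ≠ P := fun h => hZ (h ▸ hPS)
    exact hne (line_unique hPZ (mem_linesThru.1 hL) hPL (mem_linesThru.1 hL') hPL')
  calc ∑ L ∈ linesThru Z, (secantPts S L).ncard
      = ∑ L ∈ linesThru Z, ((Set.toFinite (secantPts S L)).toFinset).card :=
        Finset.sum_congr rfl fun L _ => Set.ncard_eq_toFinset_card _ _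
    _ = ((linesThru Z).biUnion (fun L => (Set.toFinite (secantPts S L)).toFinset)).card :=
        (Finset.card_biUnion hdisj).symm
    _ = S.ncard := by rw [← hbi, ← Set.ncard_eq_toFinset_card]

lemma filter_one_card_ge (F : Finset PGLine) (f : PGLine → ℕ) (h1 : ∀ L ∈ F, 1 ≤ f L) :
    2 * F.card ≤ (∑ L ∈ F, f L) + (F.filter fun L => f L = 1).card := by
  classical
  have : ∀ L ∈ F, 2 ≤ f L + (if f L = 1 then 1 else 0) := by
    intro L hL
    have := h1 L hL
    by_cases h : f L = 1 <;> simp [h] <;> omega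
  calc 2 * F.card = ∑ _L ∈ F, 2 := by rw [Finset.sum_const, smul_eq_mul, mul_comm]
    _ ≤ ∑ L ∈ F, (f L + if f L = 1 then 1 else 0) := Finset.sum_le_sum this
    _ = (∑ L ∈ F, f L) + ∑ L ∈ F, (if f L = 1 then 1 else 0) := Finset.sum_add_distrib
    _ = _ := by rw [← Finset.card_filter]

lemma tangents_bound (S : Set PGPoint) (hcard : S.ncard = 25)
    (hb : ∀ L : PGLine, (secantPts S L).Nonempty) {Z : PGPoint} (hZ : Z ∉ S)
    (E : Finset PGLine) (hE : E ⊆ linesThru Z) (hsec : ∀ L ∈ E, IsSecant S 6 L) :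
    2 * (12 - E.card) + 6 * E.card ≤ 25 + (tangentsThru S Z).card := by
  classical
  set F := linesThru Z \ E with hF
  have hFcard : F.card = 12 - E.card := by
    rw [hF, Finset.card_sdiff_of_subset hE, linesThru_card]
  have hsumE : ∑ L ∈ E, (secantPts S L).ncard = 6 * E.card := by
    rw [Finset.sum_congr rfl (fun L hL => hsec L hL)]
    rw [Finset.sum_const, smul_eq_mul, mul_comm]
  have hsumF : ∑ L ∈ F, (secantPts S L).ncard + 6 * E.card = 25 := by
    rw [← hsumE, hF, Finset.sum_sdiff hE, sum_secant S hZ, hcard]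
  have h1 : ∀ L ∈ F, 1 ≤ (secantPts S L).ncard := by
    intro L _
    have := (hb L).ncard_pos (Set.toFinite _)
    omega
  have hfil : (F.filter fun L => (secantPts S L).ncard = 1) ⊆ tangentsThru S Z := by
    intro L hL
    rw [Finset.mem_filter] at hL
    rw [mem_tangentsThru]
    exact ⟨mem_linesThru.1 (Finset.mem_sdiff.1 hL.1).1, hL.2⟩
  have hkey := filter_one_card_ge F (fun L => (secantPts S L).ncard) h1
  have hfc := Finset.card_le_card hfil
  omega

lemma core (S : Set PGPoint) (hb : ∀ L : PGLine, (secantPts S L).Nonempty)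
    (hsemi : IsSemioval S) (hcard : S.ncard = 25)
    {L M : PGLine} (hLM : L ≠ M) (hL : IsSecant S 6 L) (hM : IsSecant S 6 M)
    {X : PGPoint} (hXL : PGmem X L) (hXM : PGmem X M) : X ∈ S := by
  classical
  by_contra hX
  -- tangents through X: at least 7
  have hbX : 7 ≤ (tangentsThru S X).card := by
    have hE : ({L, M} : Finset PGLine) ⊆ linesThru X := by
      intro N hN
      rw [Finset.mem_insert, Finset.mem_singleton] at hN
      rcases hN with rfl | rfl
      · exact mem_linesThru.2 hXL
      · exact mem_linesThru.2 hXM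
    have hcard2 : ({L, M} : Finset PGLine).card = 2 := by
      rw [Finset.card_insert_of_notMem (by simpa using hLM), Finset.card_singleton]
    have := tangents_bound S hcard hb hX {L, M} hE (by
      intro N hN
      rw [Finset.mem_insert, Finset.mem_singleton] at hN
      rcases hN with rfl | rfl
      · exact hL
      · exact hM)
    rw [hcard2] at this
    omega
  -- the non-S points of L
  set NS : Finset PGPoint := (Set.toFinite (linePts L \ S)).toFinset with hNS
  have hmemNS : ∀ {Z : PGPoint}, Z ∈ NS ↔ PGmem Z L ∧ Z ∉ S := by
    intro Z
    rw [hNS, Set.Finite.mem_toFinset, Set.mem_diff, linePts, Set.mem_setOf_eq]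
  have hNScard : NS.card = 6 := by
    have h1 : (linePts L ∩ S).ncard + (linePts L \ S).ncard = (linePts L).ncard :=
      Set.ncard_inter_add_ncard_diff_eq_ncard _ _ (Set.toFinite _)
    have h2 : linePts L ∩ S = secantPts S L := by
      ext P
      rw [Set.mem_inter_iff, linePts, Set.mem_setOf_eq, secantPts, Set.mem_setOf_eq]
      tauto
    rw [h2, hL, line_card] at h1
    rw [hNS, ← Set.ncard_eq_toFinset_card]
    omega
  have hXNS : X ∈ NS := hmemNS.2 ⟨hXL, hX⟩
  -- tangents through each Z in NS: at least 3
  have hbZ : ∀ Z ∈ NS, 3 ≤ (tangentsThru S Z).card := by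
    intro Z hZ
    obtain ⟨hZL, hZS⟩ := hmemNS.1 hZ
    have hE : ({L} : Finset PGLine) ⊆ linesThru Z := by
      intro N hN
      rw [Finset.mem_singleton] at hN
      subst hN
      exact mem_linesThru.2 hZL
    have := tangents_bound S hcard hb hZS {L} hE (by
      intro N hN
      rw [Finset.mem_singleton] at hN
      subst hN
      exact hL)
    rw [Finset.card_singleton] at this
    omega
  -- tangent sets pairwise disjoint
  have hdisj : ∀ Z ∈ NS, ∀ Z' ∈ NS, Z ≠ Z' →
      Disjoint (tangentsThru S Z) (tangentsThru S Z') := by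
    intro Z hZ Z' hZ' hne
    rw [Finset.disjoint_left]
    intro N hN hN'
    obtain ⟨hZN, hNt⟩ := mem_tangentsThru.1 hN
    obtain ⟨hZ'N, -⟩ := mem_tangentsThru.1 hN'
    have : N = L := line_unique hne hZN hZ'N (hmemNS.1 hZ).1 (hmemNS.1 hZ').1
    subst this
    rw [IsTangent, IsSecant, hL] at hNt
    omega
  set U := NS.biUnion (fun Z => tangentsThru S Z) with hU
  have hUcard : U.card = ∑ Z ∈ NS, (tangentsThru S Z).card := Finset.card_biUnion hdisj
  have hlow : 22 ≤ U.card := by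
    rw [hUcard, ← Finset.add_sum_erase _ _ hXNS]
    have h5 : (NS.erase X).card = 5 := by rw [Finset.card_erase_of_mem hXNS, hNScard]
    have : (NS.erase X).card • 3 ≤ ∑ Z ∈ NS.erase X, (tangentsThru S Z).card :=
      Finset.card_nsmul_le_sum _ _ _ (fun Z hZ => hbZ Z (Finset.mem_of_mem_erase hZ))
    rw [h5, smul_eq_mul] at this
    omega
  -- injection from U into S \ linePts L
  have hup : ∀ N ∈ U, ∃ P : PGPoint, secantPts S N = {P} := by
    intro N hN
    obtain ⟨Z, -, hN⟩ := Finset.mem_biUnion.1 hN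
    obtain ⟨-, hNt⟩ := mem_tangentsThru.1 hN
    exact Set.ncard_eq_one.1 hNt
  choose tp htp using hup
  have htpS : ∀ N (hN : N ∈ U), tp N hN ∈ S ∧ PGmem (tp N hN) N := by
    intro N hN
    have : tp N hN ∈ secantPts S N := by rw [htp N hN]; rfl
    exact this
  have hnotL : ∀ N (hN : N ∈ U), tp N hN ∉ linePts L := by
    intro N hN hmem
    obtain ⟨Z, hZNS, hNZ⟩ := Finset.mem_biUnion.1 hN
    obtain ⟨hZN, hNt⟩ := mem_tangentsThru.1 hNZ
    obtain ⟨hZL, hZS⟩ := hmemNS.1 hZNS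
    have hne : tp N hN ≠ Z := fun h => hZS (h ▸ (htpS N hN).1)
    have hmem' : PGmem (tp N hN) L := hmem
    have : N = L := line_unique hne (htpS N hN).2 hZN hmem' hZL
    subst this
    rw [IsTangent, IsSecant, hL] at hNt
    omega
  have hinj : ∀ N1 (h1 : N1 ∈ U) N2 (h2 : N2 ∈ U), tp N1 h1 = tp N2 h2 → N1 = N2 := by
    intro N1 h1 N2 h2 heq
    obtain ⟨Z1, -, hN1⟩ := Finset.mem_biUnion.1 h1
    obtain ⟨Z2, -, hN2⟩ := Finset.mem_biUnion.1 h2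
    obtain ⟨-, ht1⟩ := mem_tangentsThru.1 hN1
    obtain ⟨-, ht2⟩ := mem_tangentsThru.1 hN2
    have hP := (htpS N1 h1).1
    obtain ⟨L0, -, hu⟩ := hsemi _ hP
    have e1 : N1 = L0 := hu N1 ⟨(htpS N1 h1).2, ht1⟩
    have e2 : N2 = L0 := hu N2 ⟨heq ▸ (htpS N2 h2).2, ht2⟩
    rw [e1, e2]
  -- bound card of U
  have hupS : 19 ≥ U.card := by
    have hSub : (S \ linePts L).ncard = 19 := by
      have h1 : (S ∩ linePts L).ncard + (S \ linePts L).ncard = S.ncard :=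
        Set.ncard_inter_add_ncard_diff_eq_ncard _ _ (Set.toFinite _)
      have h2 : S ∩ linePts L = secantPts S L := by
        ext P
        rw [Set.mem_inter_iff, linePts, Set.mem_setOf_eq, secantPts, Set.mem_setOf_eq]
      rw [h2, hL, hcard] at h1
      omega
    have : U.card ≤ ((Set.toFinite (S \ linePts L)).toFinset).card := by
      apply Finset.card_le_card_of_injOn (fun N => if h : N ∈ U then tp N h else X)
      · intro N hN
        rw [Finset.mem_coe, Set.Finite.mem_toFinset, Set.mem_diff]
        rw [Finset.mem_coe] at hN
        dsimp only
        rw [dif_pos hN]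
        exact ⟨(htpS N hN).1, hnotL N hN⟩
      · intro N1 h1 N2 h2 heq
        rw [Finset.mem_coe] at h1 h2
        dsimp only at heq
        rw [dif_pos h1, dif_pos h2] at heq
        exact hinj N1 h1 N2 h2 heq
    rw [← Set.ncard_eq_toFinset_card, hSub] at this
    omega
  omega


theorem three_points_of_I_in_S (S : Set PGPoint) (hS : IsBlockingSemioval S) (hcard : S.ncard = 25)
    (hmax : ∀ L : PGLine, (secantPts S L).ncard ≤ 6)
    (Q R : PGPoint) (hQ : Q ∈ S) (hR : R ∈ S) (hQR : Q ≠ R)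
    (hQ3 : ({L : PGLine | PGmem Q L ∧ IsSecant S 6 L}).ncard = 3)
    (hR3 : ({L : PGLine | PGmem R L ∧ IsSecant S 6 L}).ncard = 3)
    (n l1 l2 m1 m2 : PGLine)
    (hn : PGmem Q n ∧ PGmem R n ∧ IsSecant S 6 n)
    (hl1 : PGmem Q l1 ∧ IsSecant S 6 l1) (hl2 : PGmem Q l2 ∧ IsSecant S 6 l2)
    (hm1 : PGmem R m1 ∧ IsSecant S 6 m1) (hm2 : PGmem R m2 ∧ IsSecant S 6 m2)
    (hl12 : l1 ≠ l2) (hl1n : l1 ≠ n) (hl2n : l2 ≠ n)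
    (hm12 : m1 ≠ m2) (hm1n : m1 ≠ n) (hm2n : m2 ≠ n)
    (A B C D : PGPoint)
    (hA : PGmem A l1 ∧ PGmem A m1) (hB : PGmem B l1 ∧ PGmem B m2)
    (hC : PGmem C l2 ∧ PGmem C m1) (hD : PGmem D l2 ∧ PGmem D m2)
    (I : Set PGPoint) (hI : I = {A, B, C, D}) :
    3 ≤ (I ∩ S).ncard := by
  obtain ⟨⟨hb, -⟩, hsemi⟩ := hS
  -- l_i and m_j are distinct lines
  have hlm : ∀ (l m : PGLine), PGmem Q l → PGmem R m → l ≠ n → l ≠ m := by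
    rintro l m hQl hRm hln rfl
    exact hln (line_unique hQR hQl hRm hn.1 hn.2.1)
  have h11 : l1 ≠ m1 := hlm _ _ hl1.1 hm1.1 hl1n
  have h12 : l1 ≠ m2 := hlm _ _ hl1.1 hm2.1 hl1n
  have h21 : l2 ≠ m1 := hlm _ _ hl2.1 hm1.1 hl2n
  have h22 : l2 ≠ m2 := hlm _ _ hl2.1 hm2.1 hl2n
  -- all four intersection points are in S
  have hAS : A ∈ S := core S hb hsemi hcard h11 hl1.2 hm1.2 hA.1 hA.2
  have hBS : B ∈ S := core S hb hsemi hcard h12 hl1.2 hm2.2 hB.1 hB.2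
  have hCS : C ∈ S := core S hb hsemi hcard h21 hl2.2 hm1.2 hC.1 hC.2
  -- A, B, C pairwise distinct
  have hRl1 : ¬ PGmem R l1 := by
    intro h
    exact hl1n (line_unique hQR hl1.1 h hn.1 hn.2.1)
  have hQm1 : ¬ PGmem Q m1 := by
    intro h
    exact hm1n (line_unique hQR h hm1.1 hn.1 hn.2.1)
  have hQm2 : ¬ PGmem Q m2 := by
    intro h
    exact hm2n (line_unique hQR h hm2.1 hn.1 hn.2.1)
  have hAB : A ≠ B := by
    rintro rfl
    have hAR : A ≠ R := fun h => hRl1 (h ▸ hA.1)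
    exact hm12 (line_unique hAR hA.2 hm1.1 hB.2 hm2.1)
  have hAC : A ≠ C := by
    rintro rfl
    have hAQ : A ≠ Q := fun h => hQm1 (h ▸ hA.2)
    exact hl12 (line_unique hAQ hA.1 hl1.1 hC.1 hl2.1)
  have hBC : B ≠ C := by
    rintro rfl
    have hBQ : B ≠ Q := fun h => hQm2 (h ▸ hB.2)
    exact hl12 (line_unique hBQ hB.1 hl1.1 hC.1 hl2.1)
  -- conclude
  have hsub : {A, B, C} ⊆ I ∩ S := by
    intro P hP
    rcases hP with rfl | rfl | rfl
    · exact ⟨by rw [hI]; exact Set.mem_insert _ _, hAS⟩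
    · exact ⟨by rw [hI]; right; exact Set.mem_insert _ _, hBS⟩
    · exact ⟨by rw [hI]; right; right; exact Set.mem_insert _ _, hCS⟩
  have h3 : ({A, B, C} : Set PGPoint).ncard = 3 := by
    rw [Set.ncard_insert_of_notMem (by simp [hAB, hAC]) (Set.toFinite _),
      Set.ncard_pair hBC]
  calc 3 = ({A, B, C} : Set PGPoint).ncard := h3.symm
    _ ≤ (I ∩ S).ncard := Set.ncard_le_ncard hsub (Set.toFinite _)
end

section
/- Let S be a blocking semioval with exactly 25 points in PG(2,11) such that no line meets S in more than 6 points. Suppose Q and R are distinct points of S each lying on exactly three 6-secants to S, with the line n through Q and R a 6-secant; let ℓ1, ℓ2 be the other two 6-secants through Q, let m1, m2 be the other two 6-secants through R, let I be the set of four intersection points ℓ_i ∩ m_j for i,j ∈ {1,2}, and let S* be the set of points of S lying on at least one of the lines n, ℓ1, ℓ2, m1, m2. If exactly three points of I lie in S, then there exists a point P ∈ S \ S* lying on at least two 6-secants to S such that neither of these two 6-secants contains any point of S \ S* other than P. -/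
open Projectivization Module Finset

abbrev Vec := Fin 3 → ZMod 11

instance inst_s14 : Finite PGPoint := Quotient.finite _
instance : Finite (Submodule (ZMod 11) Vec) :=
  Finite.of_injective _ SetLike.coe_injective
instance inst_s14_2 : Finite PGLine := Subtype.finite
noncomputable instance : Fintype PGPoint := Fintype.ofFinite _
noncomputable instance : Fintype PGLine := Fintype.ofFinite _
open Classical in
lemma test : Module.finrank (ZMod 11) Vec = 3 := by simp
lemma test2 : Fintype.card Vec = 11^3 := by
  rw [card_eq_pow_finrank (K := ZMod 11)]
  norm_num
lemma test3 : Fintype.card (ZMod 11)ˣ = 10 := by rw [ZMod.card_units 11]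

noncomputable instance : DecidableEq PGPoint := Classical.decEq _
noncomputable instance : DecidableEq PGLine := Classical.decEq _
noncomputable instance (p : Prop) : Decidable p := Classical.dec _

lemma submodule_ne {P Q : PGPoint} (h : P ≠ Q) :
    Projectivization.submodule P ≠ Projectivization.submodule Q :=
  fun he => h (Projectivization.submodule_injective he)

lemma sup_finrank_two {P Q : PGPoint} (h : P ≠ Q) :
    finrank (ZMod 11) ↥(Projectivization.submodule P ⊔ Projectivization.submodule Q) = 2 := by
  have h1 := finrank_submodule P
  have h2 := finrank_submodule Q
  have key := Submodule.finrank_sup_add_finrank_inf_eq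
    (Projectivization.submodule P) (Projectivization.submodule Q)
  have hinf : finrank (ZMod 11) ↥(Projectivization.submodule P ⊓ Projectivization.submodule Q) = 0 := by
    by_contra hne
    have hle : Projectivization.submodule P ⊓ Projectivization.submodule Q ≤ Projectivization.submodule P := inf_le_left
    have hmono := Submodule.finrank_mono (R := ZMod 11) (M := Vec) hle
    rw [h1] at hmono
    have h01 : finrank (ZMod 11) ↥(Projectivization.submodule P ⊓ Projectivization.submodule Q) = 1 :=
      Nat.le_antisymm hmono (Nat.one_le_iff_ne_zero.mpr hne)
    have : Projectivization.submodule P ⊓ Projectivization.submodule Q = Projectivization.submodule P :=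
      Submodule.eq_of_le_of_finrank_le hle (by omega)
    have hPQ : Projectivization.submodule P ≤ Projectivization.submodule Q := by
      rw [← this]; exact inf_le_right
    have : Projectivization.submodule P = Projectivization.submodule Q :=
      Submodule.eq_of_le_of_finrank_le hPQ (by omega)
    exact submodule_ne h this
  omega

/-- The unique line through two distinct points. -/
lemma existsUnique_line {P Q : PGPoint} (h : P ≠ Q) :
    ∃! L : PGLine, PGmem P L ∧ PGmem Q L := by
  refine ⟨⟨_, sup_finrank_two h⟩, ⟨le_sup_left, le_sup_right⟩, ?_⟩
  rintro ⟨W, hW⟩ ⟨hP, hQ⟩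
  have hle : Projectivization.submodule P ⊔ Projectivization.submodule Q ≤ W := sup_le hP hQ
  have := Submodule.eq_of_le_of_finrank_le hle (by rw [hW, sup_finrank_two h])
  exact Subtype.ext this.symm

lemma eq_line_of_two {P Q : PGPoint} {L L' : PGLine} (h : P ≠ Q)
    (h1 : PGmem P L) (h2 : PGmem Q L) (h1' : PGmem P L') (h2' : PGmem Q L') : L = L' := by
  obtain ⟨M, -, hu⟩ := existsUnique_line h
  rw [hu L ⟨h1, h2⟩, hu L' ⟨h1', h2'⟩]

lemma rep_mem_of_le {P : PGPoint} {W : Submodule (ZMod 11) Vec}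
    (h : Projectivization.submodule P ≤ W) : P.rep ∈ W := by
  apply h
  rw [Projectivization.submodule_eq]
  exact Submodule.mem_span_singleton_self _

lemma le_of_rep_mem {P : PGPoint} {W : Submodule (ZMod 11) Vec}
    (h : P.rep ∈ W) : Projectivization.submodule P ≤ W := by
  rw [Projectivization.submodule_eq, Submodule.span_singleton_le_iff_mem]
  exact h

/-- Counting points whose representing subspace lies in `W`. -/
lemma card_points_in (W : Submodule (ZMod 11) Vec) :
    (univ.filter (fun P : PGPoint => Projectivization.submodule P ≤ W)).card * 10 + 1
      = 11 ^ (finrank (ZMod 11) W) := by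
  classical
  set t := univ.filter (fun P : PGPoint => Projectivization.submodule P ≤ W) with ht
  set s := (univ : Finset Vec).filter (fun v => v ∈ W ∧ v ≠ 0) with hs
  have hP0 : Nonempty PGPoint := inferInstance
  obtain ⟨P0⟩ := hP0
  set g : Vec → PGPoint := fun v => if h : v = 0 then P0 else Projectivization.mk (ZMod 11) v h with hg
  have hgv : ∀ (v : Vec) (hv : v ≠ 0), g v = Projectivization.mk (ZMod 11) v hv := by
    intro v hv; simp only [hg]; rw [dif_neg hv]
  have hmaps : ∀ v ∈ s, g v ∈ t := by
    intro v hv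
    rw [hs, mem_filter] at hv
    obtain ⟨-, hvW, hv0⟩ := hv
    rw [ht, mem_filter]
    refine ⟨mem_univ _, ?_⟩
    rw [hgv v hv0, Projectivization.submodule_mk, Submodule.span_singleton_le_iff_mem]
    exact hvW
  have hcount := Finset.card_eq_sum_card_fiberwise hmaps
  have hfiber : ∀ P ∈ t, (s.filter (fun v => g v = P)).card = 10 := by
    intro P hP
    rw [ht, mem_filter] at hP
    have hrepW : P.rep ∈ W := rep_mem_of_le hP.2
    have himg : (s.filter (fun v => g v = P))
        = (univ : Finset (ZMod 11)ˣ).image (fun u : (ZMod 11)ˣ => (u : ZMod 11) • P.rep) := by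
      ext v
      simp only [mem_filter, mem_image, mem_univ, true_and, hs]
      constructor
      · rintro ⟨⟨hvW, hv0⟩, hgveq⟩
        rw [hgv v hv0, ← Projectivization.mk_rep P, Projectivization.mk_eq_mk_iff] at hgveq
        obtain ⟨a, ha⟩ := hgveq
        exact ⟨a, by rw [← ha, Units.smul_def]⟩
      · rintro ⟨u, hu⟩
        have hne : (u : ZMod 11) • P.rep ≠ 0 := by
          simp only [ne_eq, smul_eq_zero, not_or]
          exact ⟨Units.ne_zero u, P.rep_nonzero⟩
        subst hu
        refine ⟨⟨Submodule.smul_mem _ _ hrepW, hne⟩, ?_⟩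
        rw [hgv _ hne]
        have hmm : Projectivization.mk (ZMod 11) ((u : ZMod 11) • P.rep) hne
            = Projectivization.mk (ZMod 11) P.rep P.rep_nonzero :=
          (Projectivization.mk_eq_mk_iff _ _ _ _ _).mpr ⟨u, by rw [Units.smul_def]⟩
        rw [hmm, Projectivization.mk_rep]
    rw [himg, Finset.card_image_of_injective _ ?_, card_univ, ZMod.card_units 11]
    intro u u' huu
    simp only at huu
    have hsub : ((u : ZMod 11) - (u' : ZMod 11)) • P.rep = 0 := by
      rw [sub_smul, huu]; simp
    rcases smul_eq_zero.mp hsub with h | h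
    · exact Units.ext (sub_eq_zero.mp h)
    · exact absurd h P.rep_nonzero
  have hWcard : Fintype.card {v : Vec // v ∈ W} = 11 ^ (finrank (ZMod 11) W) := by
    have h1 : Fintype.card {v : Vec // v ∈ W} = Fintype.card ↥W :=
      Fintype.card_congr (Equiv.refl _)
    rw [h1, card_eq_pow_finrank (K := ZMod 11) (V := ↥W), ZMod.card 11]
  have hscard : s.card = 11 ^ (finrank (ZMod 11) W) - 1 := by
    have h1 : (univ : Finset Vec).filter (fun v => v ∈ W) = s ∪ {0} := by
      ext v
      simp only [hs, mem_filter, mem_union, mem_singleton, mem_univ, true_and]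
      by_cases hv : v = 0 <;> simp [hv, W.zero_mem]
    have h2 : ((univ : Finset Vec).filter (fun v => v ∈ W)).card = 11 ^ (finrank (ZMod 11) W) := by
      rw [← Fintype.card_subtype, hWcard]
    have hdisj : Disjoint s ({0} : Finset Vec) := by
      simp only [Finset.disjoint_singleton_right, hs, mem_filter]
      tauto
    rw [h1, Finset.card_union_of_disjoint hdisj, Finset.card_singleton] at h2
    omega
  rw [hcount, Finset.sum_congr rfl hfiber, Finset.sum_const, smul_eq_mul] at hscard
  have : 11 ^ (finrank (ZMod 11) W) ≥ 1 := Nat.one_le_pow _ _ (by norm_num)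
  omega

lemma card_PGPoint : Fintype.card PGPoint = 133 := by
  have h := card_points_in ⊤
  have htop : finrank (ZMod 11) (⊤ : Submodule (ZMod 11) Vec) = 3 := by
    rw [finrank_top]; simp
  rw [htop] at h
  have : (univ.filter (fun P : PGPoint => Projectivization.submodule P ≤ (⊤ : Submodule (ZMod 11) Vec))) = univ := by
    apply Finset.filter_true_of_mem; intro _ _; exact le_top
  rw [this, card_univ] at h
  omega

/-- Each line contains exactly 12 points. -/
lemma card_pointsOn (L : PGLine) : (univ.filter (fun P : PGPoint => PGmem P L)).card = 12 := by
  have h := card_points_in L.val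
  rw [L.prop] at h
  have : (univ.filter (fun P : PGPoint => Projectivization.submodule P ≤ L.val))
      = (univ.filter (fun P : PGPoint => PGmem P L)) := rfl
  rw [this] at h
  omega

/-- Each point lies on exactly 12 lines. -/
lemma card_linesThru (P : PGPoint) : (univ.filter (fun L : PGLine => PGmem P L)).card = 12 := by
  classical
  have hL0 : Nonempty PGLine := by
    have : Nontrivial PGPoint := Fintype.one_lt_card_iff_nontrivial.mp (by rw [card_PGPoint]; norm_num)
    obtain ⟨Q, hQ⟩ := exists_ne P
    obtain ⟨L, -, -⟩ := existsUnique_line (Ne.symm hQ)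
    exact ⟨L⟩
  obtain ⟨L0⟩ := hL0
  set u : Finset PGPoint := univ.filter (fun X => X ≠ P) with hu
  set f : PGPoint → PGLine := fun X => if h : X = P then L0 else
    Classical.choose (existsUnique_line (Ne.symm h)) with hf
  have hfspec : ∀ (X : PGPoint) (h : X ≠ P), PGmem P (f X) ∧ PGmem X (f X) := by
    intro X h
    have := Classical.choose_spec (existsUnique_line (Ne.symm h))
    simp only [hf]; rw [dif_neg h]
    exact this.1
  have hfuniq : ∀ (X : PGPoint) (h : X ≠ P) (L : PGLine), PGmem P L → PGmem X L → f X = L := by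
    intro X h L h1 h2
    exact eq_line_of_two (Ne.symm h) (hfspec X h).1 (hfspec X h).2 h1 h2
  have hmaps : ∀ X ∈ u, f X ∈ univ.filter (fun L : PGLine => PGmem P L) := by
    intro X hX
    rw [hu, mem_filter] at hX
    rw [mem_filter]
    exact ⟨mem_univ _, (hfspec X hX.2).1⟩
  have hcount := Finset.card_eq_sum_card_fiberwise hmaps
  have hucard : u.card = 132 := by
    have : u = univ \ {P} := by
      ext X; simp [hu, Finset.mem_sdiff]
    rw [this, Finset.card_sdiff_of_subset (by simp), card_univ, card_PGPoint, Finset.card_singleton]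
  have hfiber : ∀ L ∈ univ.filter (fun L : PGLine => PGmem P L),
      (u.filter (fun X => f X = L)).card = 11 := by
    intro L hL
    rw [mem_filter] at hL
    have : u.filter (fun X => f X = L) = (univ.filter (fun X : PGPoint => PGmem X L)) \ {P} := by
      ext X
      simp only [hu, mem_filter, Finset.mem_sdiff, mem_univ, true_and, mem_singleton, filter_filter]
      constructor
      · rintro ⟨hXP, hfX⟩
        subst hfX
        exact ⟨(hfspec X hXP).2, hXP⟩
      · rintro ⟨hXL, hXP⟩
        exact ⟨hXP, hfuniq X hXP L hL.2 hXL⟩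
    rw [this, Finset.card_sdiff_of_subset, card_pointsOn, Finset.card_singleton]
    simp only [Finset.singleton_subset_iff, mem_filter]
    exact ⟨mem_univ _, hL.2⟩
  rw [hucard, Finset.sum_congr rfl hfiber, Finset.sum_const, smul_eq_mul] at hcount
  omega

lemma card_PGLine : Fintype.card PGLine = 133 := by
  classical
  have h1 : ∑ L : PGLine, (univ.filter (fun P : PGPoint => PGmem P L)).card
      = ∑ P : PGPoint, (univ.filter (fun L : PGLine => PGmem P L)).card := by
    simp only [Finset.card_filter]
    rw [Finset.sum_comm]
  simp only [card_pointsOn, card_linesThru, Finset.sum_const, card_univ, card_PGPoint, smul_eq_mul] at h1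
  omega

section SCount

variable {S : Set PGPoint}

lemma secant_eq_filter (S : Set PGPoint) (L : PGLine) :
    (secantPts S L).ncard = ((Set.toFinite S).toFinset.filter (fun P => PGmem P L)).card := by
  rw [← Set.ncard_coe_finset]
  congr 1
  ext P
  simp only [secantPts, Set.Finite.mem_toFinset, Finset.mem_coe, mem_filter, Set.mem_setOf_eq]

lemma sum_secants (hF : (Set.toFinite S).toFinset.card = 25) :
    ∑ L : PGLine, ((Set.toFinite S).toFinset.filter (fun P => PGmem P L)).card = 300 := by
  classical
  simp only [Finset.card_filter]
  rw [Finset.sum_comm]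
  have : ∀ P ∈ (Set.toFinite S).toFinset,
      (∑ L : PGLine, if PGmem P L then 1 else 0) = 12 := by
    intro P _
    rw [← Finset.card_filter, card_linesThru]
  rw [Finset.sum_congr rfl this, Finset.sum_const, hF, smul_eq_mul]

lemma sum_secants_pairs (hF : (Set.toFinite S).toFinset.card = 25) :
    ∑ L : PGLine, (((Set.toFinite S).toFinset.filter (fun P => PGmem P L)).card
      * (((Set.toFinite S).toFinset.filter (fun P => PGmem P L)).card - 1)) = 600 := by
  classical
  set F := (Set.toFinite S).toFinset with hFdef
  have hoff : ∀ L : PGLine, (F.filter (fun P => PGmem P L)).card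
      * ((F.filter (fun P => PGmem P L)).card - 1)
      = (F.offDiag.filter (fun p => PGmem p.1 L ∧ PGmem p.2 L)).card := by
    intro L
    have hset : (F.filter (fun P => PGmem P L)).offDiag
        = F.offDiag.filter (fun p => PGmem p.1 L ∧ PGmem p.2 L) := by
      ext p
      simp only [Finset.mem_offDiag, mem_filter]
      tauto
    rw [← hset, Finset.offDiag_card]
    set k := (F.filter (fun P => PGmem P L)).card
    cases k with
    | zero => rfl
    | succ m => simp [Nat.succ_mul, Nat.mul_succ]
  have hrw : ∑ L : PGLine, ((F.filter (fun P => PGmem P L)).card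
      * ((F.filter (fun P => PGmem P L)).card - 1))
      = ∑ L : PGLine, (F.offDiag.filter (fun p => PGmem p.1 L ∧ PGmem p.2 L)).card :=
    Finset.sum_congr rfl (fun L _ => hoff L)
  rw [hrw]
  simp only [Finset.card_filter]
  rw [Finset.sum_comm]
  have : ∀ p ∈ F.offDiag,
      (∑ L : PGLine, if PGmem p.1 L ∧ PGmem p.2 L then 1 else 0) = 1 := by
    intro p hp
    rw [← Finset.card_filter]
    obtain ⟨-, -, hne⟩ := Finset.mem_offDiag.mp hp
    obtain ⟨L, hL, hu⟩ := existsUnique_line hne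
    have : univ.filter (fun L : PGLine => PGmem p.1 L ∧ PGmem p.2 L) = {L} := by
      ext M
      simp only [mem_filter, mem_univ, true_and, mem_singleton]
      exact ⟨fun hM => hu M hM, fun h => h ▸ hL⟩
    rw [this, Finset.card_singleton]
  rw [Finset.sum_congr rfl this, Finset.sum_const, Finset.offDiag_card, hF, smul_eq_mul]

lemma t6_ge_nine (sf : PGLine → ℕ) (h1 : ∀ L, 1 ≤ sf L) (h6 : ∀ L, sf L ≤ 6)
    (hsum : ∑ L : PGLine, sf L = 300)
    (hsum2 : ∑ L : PGLine, sf L * (sf L - 1) = 600)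
    (ht1 : (univ.filter (fun L => sf L = 1)).card = 25) :
    9 ≤ (univ.filter (fun L => sf L = 6)).card := by
  classical
  set tl : ℕ → ℕ := fun k => (univ.filter (fun L => sf L = k)).card with htl
  have hmaps : ∀ L ∈ (univ : Finset PGLine), sf L ∈ Finset.range 7 := by
    intro L _; rw [Finset.mem_range]; exact Nat.lt_succ_of_le (h6 L)
  have hA : ∑ k ∈ Finset.range 7, tl k = 133 := by
    rw [htl, ← Finset.card_eq_sum_card_fiberwise hmaps, card_univ, card_PGLine]
  have hB : ∑ k ∈ Finset.range 7, k * tl k = 300 := by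
    rw [← hsum, ← Finset.sum_fiberwise_of_maps_to hmaps sf]
    apply Finset.sum_congr rfl
    intro k _
    rw [Finset.sum_congr rfl (fun L hL => (Finset.mem_filter.mp hL).2), Finset.sum_const,
      smul_eq_mul, htl, mul_comm]
  have hC : ∑ k ∈ Finset.range 7, (k * (k-1)) * tl k = 600 := by
    rw [← hsum2, ← Finset.sum_fiberwise_of_maps_to hmaps (fun L => sf L * (sf L - 1))]
    apply Finset.sum_congr rfl
    intro k _
    rw [Finset.sum_congr rfl (fun L hL => by rw [(Finset.mem_filter.mp hL).2]), Finset.sum_const,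
      smul_eq_mul, htl, mul_comm]
  have ht0 : tl 0 = 0 := by
    rw [htl]
    rw [Finset.card_eq_zero, Finset.filter_eq_empty_iff]
    intro L _
    have := h1 L; omega
  simp only [Finset.sum_range_succ, Finset.sum_range_zero] at hA hB hC
  have ht1' : tl 1 = 25 := ht1
  norm_num at hB hC
  have hgoal : tl 6 = (univ.filter (fun L => sf L = 6)).card := rfl
  omega

lemma line_nonempty : Nonempty PGLine := by
  have : Nontrivial PGPoint := Fintype.one_lt_card_iff_nontrivial.mp (by rw [card_PGPoint]; norm_num)
  obtain ⟨P, Q, hPQ⟩ := exists_pair_ne PGPoint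
  obtain ⟨L, -, -⟩ := existsUnique_line hPQ
  exact ⟨L⟩

lemma t1_count (hsemi : IsSemioval S) (hF : (Set.toFinite S).toFinset.card = 25) :
    (univ.filter (fun L : PGLine => (secantPts S L).ncard = 1)).card = 25 := by
  classical
  obtain ⟨L0⟩ := line_nonempty
  have hP0 : Nonempty PGPoint := inferInstance
  obtain ⟨P0⟩ := hP0
  set F := (Set.toFinite S).toFinset with hFdef
  have hmemF : ∀ x, x ∈ F ↔ x ∈ S := fun x => Set.Finite.mem_toFinset _
  set gpt : PGLine → PGPoint :=
    fun L => if h : (secantPts S L).Nonempty then Classical.choose h else P0 with hgpt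
  set ftang : PGPoint → PGLine :=
    fun x => if h : x ∈ S then Classical.choose (hsemi x h) else L0 with hftang
  have hgptmem : ∀ L : PGLine, (secantPts S L).Nonempty → gpt L ∈ secantPts S L := by
    intro L h
    simp only [hgpt]
    rw [dif_pos h]
    exact Classical.choose_spec h
  have hftspec : ∀ (x : PGPoint) (h : x ∈ S),
      (PGmem x (ftang x) ∧ IsTangent S (ftang x))
      ∧ ∀ M : PGLine, PGmem x M ∧ IsTangent S M → M = ftang x := by
    intro x h
    have := Classical.choose_spec (hsemi x h)
    simp only [hftang]
    rw [dif_pos h]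
    exact ⟨this.1, this.2⟩
  rw [← hF]
  apply Finset.card_nbij' gpt ftang
  · intro L hL
    rw [Finset.mem_coe, mem_filter] at hL
    have hne : (secantPts S L).Nonempty :=
      Set.nonempty_of_ncard_ne_zero (by rw [hL.2]; norm_num)
    exact (hmemF _).mpr (hgptmem L hne).1
  · intro x hx
    rw [Finset.mem_coe, mem_filter]
    have hxS := (hmemF x).mp hx
    exact ⟨mem_univ _, (hftspec x hxS).1.2⟩
  · intro L hL
    rw [Finset.mem_coe, mem_filter] at hL
    have hne : (secantPts S L).Nonempty :=
      Set.nonempty_of_ncard_ne_zero (by rw [hL.2]; norm_num)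
    have hx := hgptmem L hne
    have hxS : gpt L ∈ S := hx.1
    exact ((hftspec (gpt L) hxS).2 L ⟨hx.2, hL.2⟩).symm
  · intro x hx
    have hxS := (hmemF x).mp hx
    have hspec := (hftspec x hxS).1
    have h1 : (secantPts S (ftang x)).ncard = 1 := hspec.2
    have hne : (secantPts S (ftang x)).Nonempty :=
      Set.nonempty_of_ncard_ne_zero (by rw [h1]; norm_num)
    have hy := hgptmem (ftang x) hne
    have hxmem : x ∈ secantPts S (ftang x) := ⟨hxS, hspec.1⟩
    obtain ⟨c, hc⟩ := Set.ncard_eq_one.mp h1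
    rw [hc] at hy hxmem
    rw [hy, ← hxmem]

end SCount

set_option maxHeartbeats 1000000 in
theorem exists_P_two_clean_6_secants (S : Set PGPoint) (hS : IsBlockingSemioval S) (hcard : S.ncard = 25)
    (hmax : ∀ L : PGLine, (secantPts S L).ncard ≤ 6)
    (Q R : PGPoint) (hQ : Q ∈ S) (hR : R ∈ S) (hQR : Q ≠ R)
    (hQ3 : ({L : PGLine | PGmem Q L ∧ IsSecant S 6 L}).ncard = 3)
    (hR3 : ({L : PGLine | PGmem R L ∧ IsSecant S 6 L}).ncard = 3)
    (n l1 l2 m1 m2 : PGLine)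
    (hn : PGmem Q n ∧ PGmem R n ∧ IsSecant S 6 n)
    (hl1 : PGmem Q l1 ∧ IsSecant S 6 l1) (hl2 : PGmem Q l2 ∧ IsSecant S 6 l2)
    (hm1 : PGmem R m1 ∧ IsSecant S 6 m1) (hm2 : PGmem R m2 ∧ IsSecant S 6 m2)
    (hl12 : l1 ≠ l2) (hl1n : l1 ≠ n) (hl2n : l2 ≠ n)
    (hm12 : m1 ≠ m2) (hm1n : m1 ≠ n) (hm2n : m2 ≠ n)
    (A B C D : PGPoint)
    (hA : PGmem A l1 ∧ PGmem A m1) (hB : PGmem B l1 ∧ PGmem B m2)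
    (hC : PGmem C l2 ∧ PGmem C m1) (hD : PGmem D l2 ∧ PGmem D m2)
    (I : Set PGPoint) (hI : I = {A, B, C, D})
    (Sstar : Set PGPoint)
    (hSstar : Sstar = {P ∈ S | PGmem P n ∨ PGmem P l1 ∨ PGmem P l2 ∨ PGmem P m1 ∨ PGmem P m2})
    (hI3 : (I ∩ S).ncard = 3) :
    ∃ P ∈ S \ Sstar, ∃ t1 t2 : PGLine, t1 ≠ t2 ∧
      PGmem P t1 ∧ PGmem P t2 ∧ IsSecant S 6 t1 ∧ IsSecant S 6 t2 ∧
      (∀ X ∈ S \ Sstar, PGmem X t1 → X = P) ∧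
      (∀ X ∈ S \ Sstar, PGmem X t2 → X = P) := by
  classical
  obtain ⟨⟨hblock, -⟩, hsemi⟩ := hS
  set F := (Set.toFinite S).toFinset with hFdef
  have hmemF : ∀ x, x ∈ F ↔ x ∈ S := fun x => Set.Finite.mem_toFinset _
  have hFcard : F.card = 25 := by
    rw [← hcard, ← Set.ncard_coe_finset F, Set.Finite.coe_toFinset]
  set sfun : PGLine → ℕ := fun L => (F.filter (fun P => PGmem P L)).card with hsfun
  have hsec : ∀ L, (secantPts S L).ncard = sfun L := fun L => secant_eq_filter S L
  have hs6 : ∀ L : PGLine, IsSecant S 6 L ↔ sfun L = 6 := by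
    intro L; unfold IsSecant; rw [hsec]
  have h1le : ∀ L, 1 ≤ sfun L := by
    intro L
    have := (Set.ncard_pos (Set.toFinite _)).mpr (hblock L)
    rw [hsec] at this; omega
  have h6le : ∀ L, sfun L ≤ 6 := by
    intro L; have := hmax L; rw [hsec] at this; exact this
  have hsum : ∑ L : PGLine, sfun L = 300 := sum_secants hFcard
  have hsum2 : ∑ L : PGLine, sfun L * (sfun L - 1) = 600 := sum_secants_pairs hFcard
  have ht1 : (univ.filter (fun L => sfun L = 1)).card = 25 := by
    rw [← t1_count hsemi hFcard]
    congr 1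
    ext L
    simp only [Finset.mem_filter, hsec]
  have ht6 : 9 ≤ (univ.filter (fun L => sfun L = 6)).card :=
    t6_ge_nine sfun h1le h6le hsum hsum2 ht1
  -- line and point distinctness
  have hnl1 : n ≠ l1 := Ne.symm hl1n
  have hnl2 : n ≠ l2 := Ne.symm hl2n
  have hnm1 : n ≠ m1 := Ne.symm hm1n
  have hnm2 : n ≠ m2 := Ne.symm hm2n
  have hl1m1 : l1 ≠ m1 := fun h => hm1n (eq_line_of_two hQR (h ▸ hl1.1) hm1.1 hn.1 hn.2.1)
  have hl1m2 : l1 ≠ m2 := fun h => hm2n (eq_line_of_two hQR (h ▸ hl1.1) hm2.1 hn.1 hn.2.1)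
  have hl2m1 : l2 ≠ m1 := fun h => hm1n (eq_line_of_two hQR (h ▸ hl2.1) hm1.1 hn.1 hn.2.1)
  have hl2m2 : l2 ≠ m2 := fun h => hm2n (eq_line_of_two hQR (h ▸ hl2.1) hm2.1 hn.1 hn.2.1)
  have hAQ : A ≠ Q := fun h => hm1n (eq_line_of_two hQR (h ▸ hA.2) hm1.1 hn.1 hn.2.1)
  have hAR : A ≠ R := fun h => hl1n (eq_line_of_two (Ne.symm hQR) (h ▸ hA.1) hl1.1 hn.2.1 hn.1)
  have hBQ : B ≠ Q := fun h => hm2n (eq_line_of_two hQR (h ▸ hB.2) hm2.1 hn.1 hn.2.1)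
  have hBR : B ≠ R := fun h => hl1n (eq_line_of_two (Ne.symm hQR) (h ▸ hB.1) hl1.1 hn.2.1 hn.1)
  have hCQ : C ≠ Q := fun h => hm1n (eq_line_of_two hQR (h ▸ hC.2) hm1.1 hn.1 hn.2.1)
  have hCR : C ≠ R := fun h => hl2n (eq_line_of_two (Ne.symm hQR) (h ▸ hC.1) hl2.1 hn.2.1 hn.1)
  have hDQ : D ≠ Q := fun h => hm2n (eq_line_of_two hQR (h ▸ hD.2) hm2.1 hn.1 hn.2.1)
  have hDR : D ≠ R := fun h => hl2n (eq_line_of_two (Ne.symm hQR) (h ▸ hD.1) hl2.1 hn.2.1 hn.1)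
  have hAB : A ≠ B := fun h => hm12 (eq_line_of_two hAR hA.2 hm1.1 (h ▸ hB.2) hm2.1)
  have hAC : A ≠ C := fun h => hl12 (eq_line_of_two hAQ hA.1 hl1.1 (h ▸ hC.1) hl2.1)
  have hAD : A ≠ D := fun h => hl12 (eq_line_of_two hAQ hA.1 hl1.1 (h ▸ hD.1) hl2.1)
  have hBC : B ≠ C := fun h => hl12 (eq_line_of_two hBQ hB.1 hl1.1 (h ▸ hC.1) hl2.1)
  have hBD : B ≠ D := fun h => hl12 (eq_line_of_two hBQ hB.1 hl1.1 (h ▸ hD.1) hl2.1)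
  have hCD : C ≠ D := fun h => hm12 (eq_line_of_two hCR hC.2 hm1.1 (h ▸ hD.2) hm2.1)
  -- the key pinning lemma: a point on two distinct lines equals the known common point
  have key : ∀ {x y : PGPoint} {L M : PGLine}, L ≠ M → PGmem x L → PGmem x M →
      PGmem y L → PGmem y M → x = y := by
    intro x y L M hLM hxL hxM hyL hyM
    by_contra hne
    exact hLM (eq_line_of_two hne hxL hyL hxM hyM)
  set Fn := F.filter (fun P => PGmem P n) with hFn
  set Fl1 := F.filter (fun P => PGmem P l1) with hFl1
  set Fl2 := F.filter (fun P => PGmem P l2) with hFl2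
  set Fm1 := F.filter (fun P => PGmem P m1) with hFm1
  set Fm2 := F.filter (fun P => PGmem P m2) with hFm2
  have hQF : Q ∈ F := (hmemF Q).mpr hQ
  have hRF : R ∈ F := (hmemF R).mpr hR
  have hn6 : Fn.card = 6 := (hs6 n).mp hn.2.2
  have hl16 : Fl1.card = 6 := (hs6 l1).mp hl1.2
  have hl26 : Fl2.card = 6 := (hs6 l2).mp hl2.2
  have hm16 : Fm1.card = 6 := (hs6 m1).mp hm1.2
  have hm26 : Fm2.card = 6 := (hs6 m2).mp hm2.2
  -- union cardinalities
  have hi1 : Fn ∩ Fl1 = {Q} := by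
    ext x
    simp only [Finset.mem_inter, Finset.mem_filter, Finset.mem_singleton, hFn, hFl1]
    constructor
    · rintro ⟨⟨-, hxn⟩, -, hxl⟩
      exact key hnl1 hxn hxl hn.1 hl1.1
    · rintro rfl
      exact ⟨⟨hQF, hn.1⟩, hQF, hl1.1⟩
  have hc1 : ((Fn ∪ Fl1).card : ℤ) = 11 := by
    have := Finset.card_union_add_card_inter Fn Fl1
    rw [hi1, hn6, hl16, Finset.card_singleton] at this
    omega
  have hi2 : (Fn ∪ Fl1) ∩ Fl2 = {Q} := by
    ext x
    simp only [Finset.mem_inter, Finset.mem_union, Finset.mem_filter, Finset.mem_singleton,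
      hFn, hFl1, hFl2]
    constructor
    · rintro ⟨hun, -, hxl2⟩
      rcases hun with ⟨-, hxn⟩ | ⟨-, hxl1⟩
      · exact key hnl2 hxn hxl2 hn.1 hl2.1
      · exact key hl12 hxl1 hxl2 hl1.1 hl2.1
    · rintro rfl
      exact ⟨Or.inl ⟨hQF, hn.1⟩, hQF, hl2.1⟩
  have hc2 : (((Fn ∪ Fl1) ∪ Fl2).card : ℤ) = 16 := by
    have := Finset.card_union_add_card_inter (Fn ∪ Fl1) Fl2
    rw [hi2, hl26, Finset.card_singleton] at this
    omega
  set T1 := ({A, C} : Finset PGPoint) ∩ F with hT1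
  set T2 := ({B, D} : Finset PGPoint) ∩ F with hT2
  have hi3 : ((Fn ∪ Fl1) ∪ Fl2) ∩ Fm1 = insert R T1 := by
    ext x
    simp only [Finset.mem_inter, Finset.mem_union, Finset.mem_filter, Finset.mem_insert,
      Finset.mem_singleton, hFn, hFl1, hFl2, hFm1, hT1]
    constructor
    · rintro ⟨hun, hxF, hxm1⟩
      rcases hun with (⟨-, hxn⟩ | ⟨-, hxl1⟩) | ⟨-, hxl2⟩
      · exact Or.inl (key hnm1 hxn hxm1 hn.2.1 hm1.1)
      · exact Or.inr ⟨Or.inl (key hl1m1 hxl1 hxm1 hA.1 hA.2), hxF⟩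
      · exact Or.inr ⟨Or.inr (key hl2m1 hxl2 hxm1 hC.1 hC.2), hxF⟩
    · rintro (rfl | ⟨(rfl | rfl), hxF⟩)
      · exact ⟨Or.inl (Or.inl ⟨hRF, hn.2.1⟩), hRF, hm1.1⟩
      · exact ⟨Or.inl (Or.inr ⟨hxF, hA.1⟩), hxF, hA.2⟩
      · exact ⟨Or.inr ⟨hxF, hC.1⟩, hxF, hC.2⟩
  have hc3 : ((((Fn ∪ Fl1) ∪ Fl2) ∪ Fm1).card : ℤ) = 21 - T1.card := by
    have h := Finset.card_union_add_card_inter ((Fn ∪ Fl1) ∪ Fl2) Fm1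
    have hR1 : R ∉ T1 := by
      simp only [hT1, Finset.mem_inter, Finset.mem_insert, Finset.mem_singleton]
      rintro ⟨(h | h), -⟩
      exacts [hAR (h.symm), hCR (h.symm)]
    rw [hi3, hm16, Finset.card_insert_of_notMem hR1] at h
    push_cast
    omega
  have hi4 : (((Fn ∪ Fl1) ∪ Fl2) ∪ Fm1) ∩ Fm2 = insert R T2 := by
    ext x
    simp only [Finset.mem_inter, Finset.mem_union, Finset.mem_filter, Finset.mem_insert,
      Finset.mem_singleton, hFn, hFl1, hFl2, hFm1, hFm2, hT2]
    constructor
    · rintro ⟨hun, hxF, hxm2⟩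
      rcases hun with ((⟨-, hxn⟩ | ⟨-, hxl1⟩) | ⟨-, hxl2⟩) | ⟨-, hxm1⟩
      · exact Or.inl (key hnm2 hxn hxm2 hn.2.1 hm2.1)
      · exact Or.inr ⟨Or.inl (key hl1m2 hxl1 hxm2 hB.1 hB.2), hxF⟩
      · exact Or.inr ⟨Or.inr (key hl2m2 hxl2 hxm2 hD.1 hD.2), hxF⟩
      · exact Or.inl (key hm12 hxm1 hxm2 hm1.1 hm2.1)
    · rintro (rfl | ⟨(rfl | rfl), hxF⟩)
      · exact ⟨Or.inl (Or.inl (Or.inl ⟨hRF, hn.2.1⟩)), hRF, hm2.1⟩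
      · exact ⟨Or.inl (Or.inl (Or.inr ⟨hxF, hB.1⟩)), hxF, hB.2⟩
      · exact ⟨Or.inl (Or.inr ⟨hxF, hD.1⟩), hxF, hD.2⟩
  have hc4 : (((((Fn ∪ Fl1) ∪ Fl2) ∪ Fm1) ∪ Fm2).card : ℤ) = 26 - T1.card - T2.card := by
    have h := Finset.card_union_add_card_inter (((Fn ∪ Fl1) ∪ Fl2) ∪ Fm1) Fm2
    have hR2 : R ∉ T2 := by
      simp only [hT2, Finset.mem_inter, Finset.mem_insert, Finset.mem_singleton]
      rintro ⟨(h | h), -⟩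
      exacts [hBR (h.symm), hDR (h.symm)]
    rw [hi4, hm26, Finset.card_insert_of_notMem hR2] at h
    push_cast
    omega
  have hTsum : T1.card + T2.card = 3 := by
    have hIeq : I ∩ S = ↑(({A, B, C, D} : Finset PGPoint) ∩ F) := by
      ext x
      simp only [hI, Set.mem_inter_iff, Set.mem_insert_iff, Set.mem_singleton_iff,
        Finset.coe_inter, Finset.coe_insert, Finset.coe_singleton, Finset.mem_coe,
        Finset.mem_inter, Finset.mem_insert, Finset.mem_singleton, hmemF]
    have hIc : (({A, B, C, D} : Finset PGPoint) ∩ F).card = 3 := by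
      rw [hIeq, Set.ncard_coe_finset] at hI3
      exact hI3
    have hsplit : ({A, B, C, D} : Finset PGPoint) = {A, C} ∪ {B, D} := by
      ext x
      simp only [Finset.mem_insert, Finset.mem_singleton, Finset.mem_union]
      tauto
    have hdisj : Disjoint T1 T2 := by
      rw [Finset.disjoint_left]
      intro x hx1 hx2
      simp only [hT1, hT2, Finset.mem_inter, Finset.mem_insert, Finset.mem_singleton] at hx1 hx2
      rcases hx1.1 with rfl | rfl <;> rcases hx2.1 with h | h
      exacts [hAB h, hAD h, hBC h.symm, hCD h]
    rw [hsplit, Finset.union_inter_distrib_right] at hIc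
    rw [← Finset.card_union_of_disjoint hdisj]
    exact hIc
  have hUcard : ((((Fn ∪ Fl1) ∪ Fl2) ∪ Fm1) ∪ Fm2).card = 23 := by omega
  have hUsub : (((Fn ∪ Fl1) ∪ Fl2) ∪ Fm1) ∪ Fm2 ⊆ F := by
    intro x hx
    simp only [Finset.mem_union, Finset.mem_filter, hFn, hFl1, hFl2, hFm1, hFm2] at hx
    tauto
  have hSstarU : Sstar = ↑((((Fn ∪ Fl1) ∪ Fl2) ∪ Fm1) ∪ Fm2) := by
    rw [hSstar]
    ext x
    simp only [Set.mem_setOf_eq, Finset.coe_union, Set.mem_union, Finset.mem_coe,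
      Finset.mem_filter, hFn, hFl1, hFl2, hFm1, hFm2, Finset.mem_union, hmemF]
    tauto
  set Fd := F \ ((((Fn ∪ Fl1) ∪ Fl2) ∪ Fm1) ∪ Fm2) with hFdd
  have hFdc : Fd.card = 2 := by
    rw [hFdd, Finset.card_sdiff_of_subset hUsub, hFcard, hUcard]
  obtain ⟨P, P', hPP', hFdeq⟩ := Finset.card_eq_two.mp hFdc
  have hSdiff : S \ Sstar = ↑Fd := by
    ext x
    simp only [Set.mem_diff, hSstarU, Finset.mem_coe, hFdd, Finset.mem_sdiff, hmemF]
  -- every 6-secant other than the five passes through P or P'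
  set five := ({n, l1, l2, m1, m2} : Finset PGLine) with hfive
  have hthru : ∀ h : PGLine, sfun h = 6 → h ∉ five → PGmem P h ∨ PGmem P' h := by
    intro h h6' hnot5
    by_contra hcon
    push_neg at hcon
    have hnotmem : ∀ M ∈ five, h ≠ M := fun M hM he => hnot5 (he ▸ hM)
    set XF := F.filter (fun x => PGmem x h) with hXF
    have hsub : XF ⊆ (((Fn ∪ Fl1) ∪ Fl2) ∪ Fm1) ∪ Fm2 := by
      intro x hx
      rw [hXF, Finset.mem_filter] at hx
      by_contra hxU
      have hxFd : x ∈ Fd := Finset.mem_sdiff.mpr ⟨hx.1, hxU⟩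
      rw [hFdeq] at hxFd
      rcases Finset.mem_insert.mp hxFd with rfl | hxx
      · exact hcon.1 hx.2
      · rw [Finset.mem_singleton] at hxx
        subst hxx
        exact hcon.2 hx.2
    have hpieces : XF = ((((XF ∩ Fn) ∪ (XF ∩ Fl1)) ∪ (XF ∩ Fl2)) ∪ (XF ∩ Fm1)) ∪ (XF ∩ Fm2) := by
      have h0 : XF = XF ∩ ((((Fn ∪ Fl1) ∪ Fl2) ∪ Fm1) ∪ Fm2) :=
        (Finset.inter_eq_left.mpr hsub).symm
      rw [Finset.inter_union_distrib_left, Finset.inter_union_distrib_left,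
        Finset.inter_union_distrib_left, Finset.inter_union_distrib_left] at h0
      exact h0
    have hple : ∀ (M : PGLine) (G : Finset PGPoint), G = F.filter (fun P => PGmem P M) → h ≠ M →
        (XF ∩ G).card ≤ 1 := by
      intro M G hG hhM
      apply Finset.card_le_one.mpr
      intro a ha b hb
      rw [hG] at ha hb
      simp only [hXF, Finset.mem_inter, Finset.mem_filter] at ha hb
      by_contra hne
      exact hhM (eq_line_of_two hne ha.1.2 hb.1.2 ha.2.2 hb.2.2)
    have h1 := hple n Fn hFn (hnotmem n (by simp [hfive]))
    have h2 := hple l1 Fl1 hFl1 (hnotmem l1 (by simp [hfive]))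
    have h3 := hple l2 Fl2 hFl2 (hnotmem l2 (by simp [hfive]))
    have h4 := hple m1 Fm1 hFm1 (hnotmem m1 (by simp [hfive]))
    have h5 := hple m2 Fm2 hFm2 (hnotmem m2 (by simp [hfive]))
    have hcard6 : XF.card = 6 := h6'
    rw [hpieces] at hcard6
    have u1 : ((XF ∩ Fn) ∪ (XF ∩ Fl1)).card ≤ (XF ∩ Fn).card + (XF ∩ Fl1).card :=
      Finset.card_union_le _ _
    have u2 : (((XF ∩ Fn) ∪ (XF ∩ Fl1)) ∪ (XF ∩ Fl2)).card
        ≤ ((XF ∩ Fn) ∪ (XF ∩ Fl1)).card + (XF ∩ Fl2).card := Finset.card_union_le _ _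
    have u3 : ((((XF ∩ Fn) ∪ (XF ∩ Fl1)) ∪ (XF ∩ Fl2)) ∪ (XF ∩ Fm1)).card
        ≤ (((XF ∩ Fn) ∪ (XF ∩ Fl1)) ∪ (XF ∩ Fl2)).card + (XF ∩ Fm1).card :=
      Finset.card_union_le _ _
    have u4 : (((((XF ∩ Fn) ∪ (XF ∩ Fl1)) ∪ (XF ∩ Fl2)) ∪ (XF ∩ Fm1)) ∪ (XF ∩ Fm2)).card
        ≤ ((((XF ∩ Fn) ∪ (XF ∩ Fl1)) ∪ (XF ∩ Fl2)) ∪ (XF ∩ Fm1)).card + (XF ∩ Fm2).card :=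
      Finset.card_union_le _ _
    omega
  have hfivecard : five.card = 5 := by
    have e1 : m1 ∉ ({m2} : Finset PGLine) := by simp [hm12]
    have e2 : l2 ∉ ({m1, m2} : Finset PGLine) := by simp [hl2m1, hl2m2]
    have e3 : l1 ∉ ({l2, m1, m2} : Finset PGLine) := by simp [hl12, hl1m1, hl1m2]
    have e4 : n ∉ ({l1, l2, m1, m2} : Finset PGLine) := by simp [hnl1, hnl2, hnm1, hnm2]
    rw [hfive, Finset.card_insert_of_notMem e4, Finset.card_insert_of_notMem e3,
      Finset.card_insert_of_notMem e2, Finset.card_insert_of_notMem e1, Finset.card_singleton]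
  set X6 := univ.filter (fun L => sfun L = 6) with hX6
  have hfivesub : five ⊆ X6 := by
    intro M hM
    rw [hX6, Finset.mem_filter]
    refine ⟨Finset.mem_univ _, ?_⟩
    simp only [hfive, Finset.mem_insert, Finset.mem_singleton] at hM
    rcases hM with rfl | rfl | rfl | rfl | rfl
    exacts [(hs6 _).mp hn.2.2, (hs6 _).mp hl1.2, (hs6 _).mp hl2.2,
      (hs6 _).mp hm1.2, (hs6 _).mp hm2.2]
  set Xo := X6 \ five with hXo
  have hXoc : 4 ≤ Xo.card := by
    rw [hXo, Finset.card_sdiff_of_subset hfivesub, hfivecard]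
    omega
  set XP := Xo.filter (fun h => PGmem P h ∧ ¬ PGmem P' h) with hXP
  set XP' := Xo.filter (fun h => PGmem P' h ∧ ¬ PGmem P h) with hXP'
  set Xb := Xo.filter (fun h => PGmem P h ∧ PGmem P' h) with hXb
  have hcover : Xo ⊆ (XP ∪ XP') ∪ Xb := by
    intro h hh
    have hh6 : sfun h = 6 := by
      have := Finset.mem_sdiff.mp hh
      exact (Finset.mem_filter.mp this.1).2
    have hnot5 : h ∉ five := (Finset.mem_sdiff.mp hh).2
    rcases hthru h hh6 hnot5 with hp | hp'
    · by_cases hbb : PGmem P' h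
      · exact Finset.mem_union_right _ (Finset.mem_filter.mpr ⟨hh, hp, hbb⟩)
      · exact Finset.mem_union_left _ (Finset.mem_union_left _ (Finset.mem_filter.mpr ⟨hh, hp, hbb⟩))
    · by_cases hbb : PGmem P h
      · exact Finset.mem_union_right _ (Finset.mem_filter.mpr ⟨hh, hbb, hp'⟩)
      · exact Finset.mem_union_left _ (Finset.mem_union_right _ (Finset.mem_filter.mpr ⟨hh, hp', hbb⟩))
  have hXbc : Xb.card ≤ 1 := by
    apply Finset.card_le_one.mpr
    intro a ha b hb
    simp only [hXb, Finset.mem_filter] at ha hb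
    exact eq_line_of_two hPP' ha.2.1 ha.2.2 hb.2.1 hb.2.2
  have hcount : 2 ≤ XP.card ∨ 2 ≤ XP'.card := by
    by_contra hc
    push_neg at hc
    have h1 : Xo.card ≤ ((XP ∪ XP') ∪ Xb).card := Finset.card_le_card hcover
    have h2 : ((XP ∪ XP') ∪ Xb).card ≤ XP.card + XP'.card + Xb.card :=
      le_trans (Finset.card_union_le _ _) (by gcongr; exact Finset.card_union_le _ _)
    omega
  clear hthru hcover
  have hPFd : P ∈ Fd := by rw [hFdeq]; exact Finset.mem_insert_self _ _
  have hP'Fd : P' ∈ Fd := by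
    rw [hFdeq]; exact Finset.mem_insert_of_mem (Finset.mem_singleton_self _)
  have main : ∀ (Z Z' : PGPoint), Z ∈ Fd → Z' ∈ Fd → (∀ x ∈ Fd, x = Z ∨ x = Z') →
      2 ≤ (Xo.filter (fun h => PGmem Z h ∧ ¬ PGmem Z' h)).card →
      ∃ P ∈ S \ Sstar, ∃ t1 t2 : PGLine, t1 ≠ t2 ∧
        PGmem P t1 ∧ PGmem P t2 ∧ IsSecant S 6 t1 ∧ IsSecant S 6 t2 ∧
        (∀ X ∈ S \ Sstar, PGmem X t1 → X = P) ∧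
        (∀ X ∈ S \ Sstar, PGmem X t2 → X = P) := by
    intro Z Z' hZ hZ' hpair hcard2
    obtain ⟨t1, ht1m, t2, ht2m, ht12⟩ := Finset.one_lt_card.mp hcard2
    have hZmem : Z ∈ S \ Sstar := by rw [hSdiff]; exact hZ
    have hprop : ∀ t : PGLine, t ∈ Xo.filter (fun h => PGmem Z h ∧ ¬ PGmem Z' h) →
        PGmem Z t ∧ IsSecant S 6 t ∧ (∀ X ∈ S \ Sstar, PGmem X t → X = Z) := by
      intro t ht
      rw [Finset.mem_filter] at ht
      obtain ⟨hto, htZ, htZ'⟩ := ht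
      have ht6 : sfun t = 6 := (Finset.mem_filter.mp (Finset.mem_sdiff.mp hto).1).2
      refine ⟨htZ, (hs6 t).mpr ht6, ?_⟩
      intro X hX hXt
      rw [hSdiff] at hX
      rcases hpair X hX with rfl | rfl
      · rfl
      · exact absurd hXt htZ'
    obtain ⟨h1Z, h1s, h1c⟩ := hprop t1 ht1m
    obtain ⟨h2Z, h2s, h2c⟩ := hprop t2 ht2m
    exact ⟨Z, hZmem, t1, t2, ht12, h1Z, h2Z, h1s, h2s, h1c, h2c⟩
  have hpairP : ∀ x ∈ Fd, x = P ∨ x = P' := by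
    intro x hx
    rw [hFdeq] at hx
    rcases Finset.mem_insert.mp hx with rfl | hx
    · exact Or.inl rfl
    · exact Or.inr (Finset.mem_singleton.mp hx)
  rcases hcount with hc | hc
  · exact main P P' hPFd hP'Fd hpairP hc
  · exact main P' P hP'Fd hPFd (fun x hx => (hpairP x hx).symm) hc
end

section
/- Let g be the projective transformation of PG(2,11) induced by the diagonal matrix diag(1,9,4) over ZMod 11, and let B be the 26-point set {(1,1,0), (1,2,0), (1,3,0), (1,4,0), (1,5,0), (1,6,0), (1,7,0), (1,8,0), (1,9,0), (1,10,0), (0,0,1), (1,0,2), (1,0,6), (1,0,7), (1,0,8), (1,0,10), (1,1,3), (1,2,3), (1,3,5), (1,4,4), (1,5,9), (1,6,5), (1,7,1), (1,8,4), (1,9,1), (1,10,9)} of points given by homogeneous coordinates. Then g maps B onto itself, g has order 5, and g fixes the three points (1,0,0), (0,1,0), (0,0,1). -/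
/-- The point of `PG(2,11)` with homogeneous coordinates `(x, y, z)`. -/
def pt (x y z : ZMod 11) (h : ![x, y, z] ≠ 0 := by decide) : PGPoint :=
  Projectivization.mk (ZMod 11) ![x, y, z] h

/-- The 26-point set from Table 2. -/
def B26 : Set PGPoint :=
  {pt 1 1 0, pt 1 2 0, pt 1 3 0, pt 1 4 0, pt 1 5 0, pt 1 6 0, pt 1 7 0, pt 1 8 0,
   pt 1 9 0, pt 1 10 0, pt 0 0 1, pt 1 0 2, pt 1 0 6, pt 1 0 7, pt 1 0 8, pt 1 0 10,
   pt 1 1 3, pt 1 2 3, pt 1 3 5, pt 1 4 4, pt 1 5 9, pt 1 6 5, pt 1 7 1, pt 1 8 4,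
   pt 1 9 1, pt 1 10 9}

/-- The diagonal matrix `diag(1,9,4)` over `ZMod 11`. -/
def Mdiag : Matrix (Fin 3) (Fin 3) (ZMod 11) := Matrix.diagonal ![1, 9, 4]

/-- `diag(1,9,4)` is invertible, with explicit inverse `diag(1,5,3)`. -/
def MdiagInvertible : Invertible Mdiag :=
  ⟨Matrix.diagonal ![1, 5, 3], by decide, by decide⟩

/-- `diag(1,9,4)` as an element of `GL(3,11)`. -/
def Mgl : GL (Fin 3) (ZMod 11) :=
  ⟨Mdiag, Matrix.diagonal ![1, 5, 3], by decide, by decide⟩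

/-- The projective general linear group `PGL(3,11)`, i.e. `GL(3,11)` modulo its center. -/
abbrev PGL3 : Type :=
  GL (Fin 3) (ZMod 11) ⧸ Subgroup.center (GL (Fin 3) (ZMod 11))

/-- The class of `diag(1,9,4)` in `PGL(3,11)`. -/
def gPGL : PGL3 := QuotientGroup.mk Mgl

/-- The projective transformation of `PG(2,11)` induced by `diag(1,9,4)`,
acting on points via the action of the matrix on representing vectors. -/
def g : PGPoint → PGPoint :=
  Projectivization.map (Mdiag.toLinearEquiv' MdiagInvertible).toLinearMap
    (Mdiag.toLinearEquiv' MdiagInvertible).injective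

lemma mk_congr {v w : Fin 3 → ZMod 11} (hv : v ≠ 0) (hw : w ≠ 0) (h : v = w) :
    Projectivization.mk (ZMod 11) v hv = Projectivization.mk (ZMod 11) w hw := by
  subst h; rfl

lemma g_pt (x y z : ZMod 11) (h : ![x, y, z] ≠ 0) (h2 : ![x, 9*y, 4*z] ≠ 0) :
    g (pt x y z h) = pt x (9*y) (4*z) h2 := by
  unfold g pt
  rw [Projectivization.map_mk]
  apply mk_congr
  funext i
  fin_cases i <;>
    simp [Mdiag, Matrix.toLinearEquiv', Matrix.mulVec, Matrix.diagonal, dotProduct,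
      Fin.sum_univ_three, Matrix.toLin'_apply, unitOfInvertible]

lemma g_pt' (x y z x' y' z' : ZMod 11) (h : ![x, y, z] ≠ 0) (h' : ![x', y', z'] ≠ 0)
    (he : (![x, 9*y, 4*z] : Fin 3 → ZMod 11) = ![x', y', z']) :
    g (pt x y z h) = pt x' y' z' h' := by
  rw [g_pt x y z h (he ▸ h')]
  exact mk_congr _ _ he

lemma g001 : g (pt 0 0 1) = pt 0 0 1 := by
  rw [g_pt' 0 0 1 0 0 4 (by decide) (by decide) (by decide)]
  unfold pt
  rw [Projectivization.mk_eq_mk_iff']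
  exact ⟨4, by decide⟩

lemma g010 : g (pt 0 1 0) = pt 0 1 0 := by
  rw [g_pt' 0 1 0 0 9 0 (by decide) (by decide) (by decide)]
  unfold pt
  rw [Projectivization.mk_eq_mk_iff']
  exact ⟨9, by decide⟩

lemma g100 : g (pt 1 0 0) = pt 1 0 0 :=
  g_pt' 1 0 0 1 0 0 (by decide) (by decide) (by decide)

lemma e1 : g (pt 1 1 0) = pt 1 9 0 := g_pt' 1 1 0 1 9 0 (by decide) (by decide) (by decide)
lemma e2 : g (pt 1 2 0) = pt 1 7 0 := g_pt' 1 2 0 1 7 0 (by decide) (by decide) (by decide)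
lemma e3 : g (pt 1 3 0) = pt 1 5 0 := g_pt' 1 3 0 1 5 0 (by decide) (by decide) (by decide)
lemma e4 : g (pt 1 4 0) = pt 1 3 0 := g_pt' 1 4 0 1 3 0 (by decide) (by decide) (by decide)
lemma e5 : g (pt 1 5 0) = pt 1 1 0 := g_pt' 1 5 0 1 1 0 (by decide) (by decide) (by decide)
lemma e6 : g (pt 1 6 0) = pt 1 10 0 := g_pt' 1 6 0 1 10 0 (by decide) (by decide) (by decide)
lemma e7 : g (pt 1 7 0) = pt 1 8 0 := g_pt' 1 7 0 1 8 0 (by decide) (by decide) (by decide)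
lemma e8 : g (pt 1 8 0) = pt 1 6 0 := g_pt' 1 8 0 1 6 0 (by decide) (by decide) (by decide)
lemma e9 : g (pt 1 9 0) = pt 1 4 0 := g_pt' 1 9 0 1 4 0 (by decide) (by decide) (by decide)
lemma e10 : g (pt 1 10 0) = pt 1 2 0 := g_pt' 1 10 0 1 2 0 (by decide) (by decide) (by decide)
lemma e11 : g (pt 1 0 2) = pt 1 0 8 := g_pt' 1 0 2 1 0 8 (by decide) (by decide) (by decide)
lemma e12 : g (pt 1 0 6) = pt 1 0 2 := g_pt' 1 0 6 1 0 2 (by decide) (by decide) (by decide)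
lemma e13 : g (pt 1 0 7) = pt 1 0 6 := g_pt' 1 0 7 1 0 6 (by decide) (by decide) (by decide)
lemma e14 : g (pt 1 0 8) = pt 1 0 10 := g_pt' 1 0 8 1 0 10 (by decide) (by decide) (by decide)
lemma e15 : g (pt 1 0 10) = pt 1 0 7 := g_pt' 1 0 10 1 0 7 (by decide) (by decide) (by decide)
lemma e16 : g (pt 1 1 3) = pt 1 9 1 := g_pt' 1 1 3 1 9 1 (by decide) (by decide) (by decide)
lemma e17 : g (pt 1 2 3) = pt 1 7 1 := g_pt' 1 2 3 1 7 1 (by decide) (by decide) (by decide)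
lemma e18 : g (pt 1 3 5) = pt 1 5 9 := g_pt' 1 3 5 1 5 9 (by decide) (by decide) (by decide)
lemma e19 : g (pt 1 4 4) = pt 1 3 5 := g_pt' 1 4 4 1 3 5 (by decide) (by decide) (by decide)
lemma e20 : g (pt 1 5 9) = pt 1 1 3 := g_pt' 1 5 9 1 1 3 (by decide) (by decide) (by decide)
lemma e21 : g (pt 1 6 5) = pt 1 10 9 := g_pt' 1 6 5 1 10 9 (by decide) (by decide) (by decide)
lemma e22 : g (pt 1 7 1) = pt 1 8 4 := g_pt' 1 7 1 1 8 4 (by decide) (by decide) (by decide)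
lemma e23 : g (pt 1 8 4) = pt 1 6 5 := g_pt' 1 8 4 1 6 5 (by decide) (by decide) (by decide)
lemma e24 : g (pt 1 9 1) = pt 1 4 4 := g_pt' 1 9 1 1 4 4 (by decide) (by decide) (by decide)
lemma e25 : g (pt 1 10 9) = pt 1 2 3 := g_pt' 1 10 9 1 2 3 (by decide) (by decide) (by decide)

set_option maxHeartbeats 1000000 in
lemma him : g '' B26 =
    {pt 1 9 0, pt 1 7 0, pt 1 5 0, pt 1 3 0, pt 1 1 0, pt 1 10 0, pt 1 8 0, pt 1 6 0,
     pt 1 4 0, pt 1 2 0, pt 0 0 1, pt 1 0 8, pt 1 0 2, pt 1 0 6, pt 1 0 10, pt 1 0 7,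
     pt 1 9 1, pt 1 7 1, pt 1 5 9, pt 1 3 5, pt 1 1 3, pt 1 10 9, pt 1 8 4, pt 1 6 5,
     pt 1 4 4, pt 1 2 3} := by
  rw [B26]
  simp only [Set.image_insert_eq, Set.image_singleton, g001, e1, e2, e3, e4, e5, e6, e7, e8,
    e9, e10, e11, e12, e13, e14, e15, e16, e17, e18, e19, e20, e21, e22, e23, e24, e25]

set_option maxHeartbeats 2000000 in
lemma hsets : g '' B26 = B26 := by
  rw [him, B26]
  ext P
  simp only [Set.mem_insert_iff, Set.mem_singleton_iff]
  tauto

def swapU : GL (Fin 3) (ZMod 11) :=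
  ⟨![![1,0,0],![0,0,1],![0,1,0]], ![![1,0,0],![0,0,1],![0,1,0]], by decide, by decide⟩

lemma horder : orderOf gPGL = 5 := by
  have h5 : gPGL ^ 5 = 1 := by
    show QuotientGroup.mk (Mgl ^ 5) = 1
    rw [QuotientGroup.eq_one_iff]
    have : Mgl ^ 5 = 1 := by
      apply Units.ext
      rw [Units.val_pow_eq_pow_val]
      show Mdiag ^ 5 = 1
      decide
    rw [this]; exact Subgroup.one_mem _
  have hne : gPGL ≠ 1 := by
    intro h
    have h : Mgl ∈ Subgroup.center (GL (Fin 3) (ZMod 11)) :=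
      (QuotientGroup.eq_one_iff Mgl).mp h
    rw [Subgroup.mem_center_iff] at h
    have := h swapU
    have := congrArg Units.val this
    rw [Units.val_mul, Units.val_mul] at this
    revert this
    decide
  have hd : orderOf gPGL ∣ 5 := orderOf_dvd_of_pow_eq_one h5
  rcases (Nat.Prime.eq_one_or_self_of_dvd (by norm_num) _ hd) with h | h
  · exact absurd (orderOf_eq_one_iff.mp h) hne
  · exact h

theorem g_stabilizes_B26_order_five_fixes_triangle :
    g '' B26 = B26 ∧ orderOf gPGL = 5 ∧
      g (pt 1 0 0) = pt 1 0 0 ∧ g (pt 0 1 0) = pt 0 1 0 ∧ g (pt 0 0 1) = pt 0 0 1 :=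
  ⟨hsets, horder, g100, g010, g001⟩
end
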